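/- For π-reversible positive-semidefinite P and nontrivial S ⊂ X, the Frobenius distance admits the decomposition ‖G_S P G_S − Π‖_{F,π} = [3 − 1/(π(S)π(S'))] + (1/π(S)) Σ_{x,y∈S'} π(x)P(x,y) + (1/π(S')) Σ_{x,y∈S} π(x)P(x,y), where the first bracket is a submodular function of S and the other two summands are supermodular functions of S. -/

import Mathlib

open Finset Matrix

namespace GpgStmt

noncomputable section

variable {X : Type*}

/-- Matrix with all rows equal to π. -/
def Pimat {X : Type*} (π : X → ℝ) : Matrix X X ℝ := Matrix.of fun _ y => π y

def IsStochastic [Fintype X] (P : Matrix X X ℝ) : Prop :=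
  (∀ x y, 0 ≤ P x y) ∧ ∀ x, ∑ y, P x y = 1

/-- π-stationary transition matrix. -/
def IsStationary [Fintype X] (π : X → ℝ) (P : Matrix X X ℝ) : Prop :=
  IsStochastic P ∧ ∀ y, ∑ x, π x * P x y = π y

/-- π-reversible transition matrix. -/
def IsReversible [Fintype X] (π : X → ℝ) (P : Matrix X X ℝ) : Prop :=
  IsStochastic P ∧ ∀ x y, π x * P x y = π y * P y x

/-- mass of the orbit O_i = {x | o x = i}. -/
def orbMass [Fintype X] {k : ℕ} (π : X → ℝ) (o : X → Fin k) (i : Fin k) : ℝ :=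
  ∑ x ∈ Finset.filter (fun x => o x = i) Finset.univ, π x

/-- Gibbs kernel of the orbit partition induced by o. -/
def gibbs [Fintype X] {k : ℕ} (π : X → ℝ) (o : X → Fin k) : Matrix X X ℝ :=
  Matrix.of fun x y => if o x = o y then π y / orbMass π o (o x) else 0

/-- Projection chain P̄ of P with respect to the orbit partition induced by o. -/
def projChain [Fintype X] {k : ℕ} (π : X → ℝ) (o : X → Fin k) (P : Matrix X X ℝ) :
    Matrix (Fin k) (Fin k) ℝ :=
  Matrix.of fun i j => (1 / orbMass π o i) *
    ∑ x ∈ Finset.filter (fun x => o x = i) Finset.univ,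
      ∑ y ∈ Finset.filter (fun y => o y = j) Finset.univ, π x * P x y

/-- π-weighted KL divergence between transition matrices, with 0·log(0/a) = 0. -/
def klDiv {X : Type*} [Fintype X] (π : X → ℝ) (Q R : Matrix X X ℝ) : ℝ :=
  ∑ x, ∑ y, π x * Q x y * Real.log (Q x y / R x y)

/-- ℓ²(π)-adjoint of a matrix. -/
def piAdj [Fintype X] (π : X → ℝ) (M : Matrix X X ℝ) : Matrix X X ℝ :=
  Matrix.of fun x y => π y * M y x / π x

/-- squared π-weighted Frobenius norm ‖M‖²_{F,π} = Tr(M*M). -/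
def frobSq [Fintype X] (π : X → ℝ) (M : Matrix X X ℝ) : ℝ :=
  Matrix.trace (piAdj π M * M)

/-- π-mass of a finite set. -/
def mass [Fintype X] (π : X → ℝ) (S : Finset X) : ℝ := ∑ x ∈ S, π x

/-- Two-block Gibbs kernel G_S for the partition X = S ⊔ Sᶜ. -/
def gibbsTwo [Fintype X] [DecidableEq X] (π : X → ℝ) (S : Finset X) : Matrix X X ℝ :=
  Matrix.of fun x y =>
    if x ∈ S then (if y ∈ S then π y / mass π S else 0)
    else (if y ∈ S then 0 else π y / mass π Sᶜ)

/-- g(S) = (1/(π(S)π(S'))) Σ_{x∈S,y∈S'} π(x) P²(x,y). -/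
def gfun [Fintype X] [DecidableEq X] (π : X → ℝ) (P : Matrix X X ℝ) (S : Finset X) : ℝ :=
  (1 / (mass π S * mass π Sᶜ)) * ∑ x ∈ S, ∑ y ∈ Sᶜ, π x * (P * P) x y

/-- h(S) = (1/π(S)) Σ_{x∈S,y∈S'} π(x) P²(x,y). -/
def hfun [Fintype X] [DecidableEq X] (π : X → ℝ) (P : Matrix X X ℝ) (S : Finset X) : ℝ :=
  (1 / mass π S) * ∑ x ∈ S, ∑ y ∈ Sᶜ, π x * (P * P) x y

/-- Ergodicity (primitivity): some power of P has all entries positive. -/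
def IsErgodic [Fintype X] [DecidableEq X] (P : Matrix X X ℝ) : Prop :=
  ∃ m : ℕ, ∀ x y, 0 < (P ^ m) x y

/-- Shannon entropy of π. -/
def shannonEnt [Fintype X] (π : X → ℝ) : ℝ := -∑ x, π x * Real.log (π x)

/-- Entropy rate H_π(Q). -/
def entRate [Fintype X] (π : X → ℝ) (Q : Matrix X X ℝ) : ℝ :=
  -∑ x, ∑ y, π x * Q x y * Real.log (Q x y)

/-- Supermodular set function on 2^X. -/
def Supermodular {X : Type*} [DecidableEq X] (F : Finset X → ℝ) : Prop :=
  ∀ A B : Finset X, F A + F B ≤ F (A ∩ B) + F (A ∪ B)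

/-- Submodular set function on 2^X. -/
def Submodular {X : Type*} [DecidableEq X] (F : Finset X → ℝ) : Prop :=
  ∀ A B : Finset X, F (A ∩ B) + F (A ∪ B) ≤ F A + F B

/-- Positive semidefiniteness with respect to ⟨·,·⟩_π. -/
def IsPosSemidefPi [Fintype X] (π : X → ℝ) (P : Matrix X X ℝ) : Prop :=
  ∀ f : X → ℝ, 0 ≤ ∑ x, ∑ y, π x * f x * P x y * f y

/-- Nontrivial subsets, i.e. 0 < π(S) < 1. -/
def NontrivSet {X : Type*} [Fintype X] (S : Finset X) : Prop := S ≠ ∅ ∧ S ≠ Finset.univ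

/-- Supermodularity restricted to the nontrivial subsets. -/
def SupermodularOn {X : Type*} [Fintype X] [DecidableEq X] (F : Finset X → ℝ) : Prop :=
  ∀ A B : Finset X, NontrivSet A → NontrivSet B → NontrivSet (A ∩ B) →
    NontrivSet (A ∪ B) → F A + F B ≤ F (A ∩ B) + F (A ∪ B)

/-- Submodularity restricted to the nontrivial subsets. -/
def SubmodularOn {X : Type*} [Fintype X] [DecidableEq X] (F : Finset X → ℝ) : Prop :=
  ∀ A B : Finset X, NontrivSet A → NontrivSet B → NontrivSet (A ∩ B) →
    NontrivSet (A ∪ B) → F (A ∩ B) + F (A ∪ B) ≤ F A + F B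


/- ===== auxiliary lemmas ===== -/

lemma inv_four {s x y w : ℝ} (hs : 0 < s) (hsx : s ≤ x) (hsy : s ≤ y)
    (hsum : x + y = s + w) : 1/x + 1/y ≤ 1/s + 1/w := by
  have hx : 0 < x := lt_of_lt_of_le hs hsx
  have hy : 0 < y := lt_of_lt_of_le hs hsy
  have hw : w = x + y - s := by linarith
  subst hw
  have hw' : 0 < x + y - s := by linarith
  have key : 1/s + 1/(x+y-s) - (1/x + 1/y)
      = (x - s)*(y - s)*(x + y)/(s*x*y*(x+y-s)) := by
    field_simp
    ring
  nlinarith [div_nonneg (mul_nonneg (mul_nonneg (sub_nonneg.2 hsx) (sub_nonneg.2 hsy))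
    (by linarith : (0:ℝ) ≤ x + y))
    (le_of_lt (by positivity : (0:ℝ) < s*x*y*(x+y-s)))]

lemma prod_super {fA fB fI fU gA gB gI gU : ℝ} (hfA : 0 ≤ fA) (hgB : 0 ≤ gB)
    (hf : fA + fB ≤ fI + fU) (hg : gA + gB ≤ gI + gU)
    (hfIA : fI ≤ fA) (hfAU : fA ≤ fU) (hgIB : gI ≤ gB) (hgBU : gB ≤ gU) :
    fA*gA + fB*gB ≤ fI*gI + fU*gU := by
  nlinarith [mul_nonneg (sub_nonneg.2 hfAU) (sub_nonneg.2 hgBU),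
    mul_nonneg (sub_nonneg.2 hfIA) (sub_nonneg.2 hgIB)]

lemma alg_main (a q A1 A3 A4 : ℝ) (ha : 0 < a) (hb : 0 < 1 - a)
    (hA1 : A1 = a - q) (hA3 : A3 = q) (hA4 : A4 = 1 - a - q) (hq : q ≤ a * (1 - a)) :
    Real.sqrt (a*a*(A1/(a*a) - 1)^2 + a*(1-a)*(A3/((1-a)*a) - 1)^2
      + (1-a)*a*(q/(a*(1-a)) - 1)^2 + (1-a)*(1-a)*(A4/((1-a)*(1-a)) - 1)^2)
    = (3 - 1/(a*(1-a))) + (1/a)*A4 + (1/(1-a))*A1 := by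
  rw [hA1, hA3, hA4]
  have h2 : 0 ≤ 1 - q/(a*(1-a)) := by
    rw [sub_nonneg, div_le_one (by positivity)]; exact hq
  have h1 : a*a*((a-q)/(a*a) - 1)^2 + a*(1-a)*(q/((1-a)*a) - 1)^2
      + (1-a)*a*(q/(a*(1-a)) - 1)^2 + (1-a)*(1-a)*((1-a-q)/((1-a)*(1-a)) - 1)^2
      = (1 - q/(a*(1-a)))^2 := by
    field_simp
    ring
  rw [h1, Real.sqrt_sq h2]
  field_simp
  ring

lemma ite_sum_left [Fintype X] [DecidableEq X] (T : Finset X) (c : X → ℝ) (g : X → ℝ) :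
    ∑ u, (if u ∈ T then c u else 0) * g u = ∑ u ∈ T, c u * g u := by
  simp only [ite_mul, zero_mul]
  rw [Finset.sum_ite_mem, Finset.univ_inter]

lemma ite_sum_right [Fintype X] [DecidableEq X] (T : Finset X) (f : X → ℝ) (c : X → ℝ) :
    ∑ v, f v * (if v ∈ T then c v else 0) = ∑ v ∈ T, f v * c v := by
  simp only [mul_ite, mul_zero]
  rw [Finset.sum_ite_mem, Finset.univ_inter]

lemma sum_restrict [Fintype X] [DecidableEq X] (T : Finset X) (w : X → X → ℝ) :
    ∑ x ∈ T, ∑ y ∈ T, w x y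
      = ∑ x, ∑ y, (if x ∈ T then 1 else 0) * ((if y ∈ T then 1 else 0) * w x y) := by
  symm
  simp only [ite_mul, one_mul, zero_mul]
  calc ∑ x, ∑ y, (if x ∈ T then (if y ∈ T then w x y else 0) else 0)
      = ∑ x, (if x ∈ T then ∑ y, (if y ∈ T then w x y else 0) else 0) := by
        apply Finset.sum_congr rfl; intro x _; split <;> simp
    _ = ∑ x ∈ T, ∑ y, (if y ∈ T then w x y else 0) := by
        rw [Finset.sum_ite_mem, Finset.univ_inter]
    _ = ∑ x ∈ T, ∑ y ∈ T, w x y := by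
        apply Finset.sum_congr rfl; intro x _
        rw [Finset.sum_ite_mem, Finset.univ_inter]

lemma sum_sq_super [Fintype X] [DecidableEq X] (A B : Finset X) (w : X → X → ℝ)
    (hw : ∀ x y, 0 ≤ w x y) :
    ∑ x ∈ A, ∑ y ∈ A, w x y + ∑ x ∈ B, ∑ y ∈ B, w x y
      ≤ ∑ x ∈ A ∩ B, ∑ y ∈ A ∩ B, w x y + ∑ x ∈ A ∪ B, ∑ y ∈ A ∪ B, w x y := by
  rw [sum_restrict A, sum_restrict B, sum_restrict (A ∩ B), sum_restrict (A ∪ B),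
    ← Finset.sum_add_distrib, ← Finset.sum_add_distrib]
  apply Finset.sum_le_sum
  intro x _
  rw [← Finset.sum_add_distrib, ← Finset.sum_add_distrib]
  apply Finset.sum_le_sum
  intro y _
  have := hw x y
  by_cases hxA : x ∈ A <;> by_cases hxB : x ∈ B <;> by_cases hyA : y ∈ A <;>
    by_cases hyB : y ∈ B <;>
    simp [Finset.mem_inter, Finset.mem_union, hxA, hxB, hyA, hyB] <;> nlinarith

lemma dsum_mono [Fintype X] [DecidableEq X] {T₁ T₂ : Finset X} (h : T₁ ⊆ T₂)
    (w : X → X → ℝ) (hw : ∀ x y, 0 ≤ w x y) :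
    ∑ x ∈ T₁, ∑ y ∈ T₁, w x y ≤ ∑ x ∈ T₂, ∑ y ∈ T₂, w x y := by
  calc ∑ x ∈ T₁, ∑ y ∈ T₁, w x y ≤ ∑ x ∈ T₁, ∑ y ∈ T₂, w x y := by
        apply Finset.sum_le_sum; intro x _
        exact Finset.sum_le_sum_of_subset_of_nonneg h (fun y _ _ => hw x y)
    _ ≤ ∑ x ∈ T₂, ∑ y ∈ T₂, w x y := by
        apply Finset.sum_le_sum_of_subset_of_nonneg h
        intro x _ _
        exact Finset.sum_nonneg (fun y _ => hw x y)

lemma dsum_nonneg [Fintype X] [DecidableEq X] (T : Finset X) (w : X → X → ℝ)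
    (hw : ∀ x y, 0 ≤ w x y) :
    0 ≤ ∑ x ∈ T, ∑ y ∈ T, w x y :=
  Finset.sum_nonneg fun x _ => Finset.sum_nonneg fun y _ => hw x y

lemma mass_pos [Fintype X] (π : X → ℝ) (hπ : ∀ x, 0 < π x) {T : Finset X} (hT : T ≠ ∅) :
    0 < mass π T :=
  Finset.sum_pos (fun x _ => hπ x) (Finset.nonempty_of_ne_empty hT)

lemma mass_compl [Fintype X] [DecidableEq X] (π : X → ℝ) (hsum : ∑ x, π x = 1)
    (T : Finset X) : mass π Tᶜ = 1 - mass π T := by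
  have := Finset.sum_add_sum_compl T π
  rw [hsum] at this
  unfold mass; linarith

lemma mass_mono [Fintype X] (π : X → ℝ) (hπ : ∀ x, 0 < π x) {T₁ T₂ : Finset X}
    (h : T₁ ⊆ T₂) : mass π T₁ ≤ mass π T₂ :=
  Finset.sum_le_sum_of_subset_of_nonneg h (fun x _ _ => (hπ x).le)

lemma mass_modular [Fintype X] [DecidableEq X] (π : X → ℝ) (A B : Finset X) :
    mass π A + mass π B = mass π (A ∩ B) + mass π (A ∪ B) := by
  unfold mass
  rw [add_comm (∑ x ∈ A ∩ B, π x)]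
  exact Finset.sum_union_inter.symm

lemma compl_ne_empty [Fintype X] [DecidableEq X] {T : Finset X} (hT : T ≠ Finset.univ) :
    Tᶜ ≠ ∅ := by
  intro h
  apply hT
  rwa [Finset.compl_eq_empty_iff] at h

lemma split4 [Fintype X] [DecidableEq X] (S : Finset X) (F : X → X → ℝ) :
    ∑ x, ∑ y, F x y
      = ((∑ x ∈ S, ∑ y ∈ S, F x y + ∑ x ∈ S, ∑ y ∈ Sᶜ, F x y)
        + ∑ x ∈ Sᶜ, ∑ y ∈ S, F x y) + ∑ x ∈ Sᶜ, ∑ y ∈ Sᶜ, F x y := by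
  rw [← Finset.sum_add_sum_compl S (fun x => ∑ y, F x y)]
  have h1 : ∀ T : Finset X, ∑ x ∈ T, ∑ y, F x y
      = ∑ x ∈ T, ∑ y ∈ S, F x y + ∑ x ∈ T, ∑ y ∈ Sᶜ, F x y := by
    intro T
    rw [← Finset.sum_add_distrib]
    exact Finset.sum_congr rfl fun x _ => (Finset.sum_add_sum_compl S (F x)).symm
  rw [h1 S, h1 Sᶜ]
  ring

lemma dsum_factor [Fintype X] (A B : Finset X) (k : ℝ) (w : X → X → ℝ) :
    ∑ x ∈ A, ∑ y ∈ B, k * w x y = k * ∑ x ∈ A, ∑ y ∈ B, w x y := by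
  simp_rw [← Finset.mul_sum]

lemma dsum_const_mass [Fintype X] (π : X → ℝ) (A B : Finset X) (k : ℝ) :
    ∑ x ∈ A, ∑ y ∈ B, π x * π y * k = mass π A * mass π B * k := by
  calc ∑ x ∈ A, ∑ y ∈ B, π x * π y * k
      = ∑ x ∈ A, π x * ((∑ y ∈ B, π y) * k) := by
        apply Finset.sum_congr rfl; intro x _
        rw [Finset.sum_mul, Finset.mul_sum]
        apply Finset.sum_congr rfl; intro y _
        ring
    _ = (∑ x ∈ A, π x) * ((∑ y ∈ B, π y) * k) := by rw [← Finset.sum_mul]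
    _ = mass π A * mass π B * k := by unfold mass; ring

lemma gpg_apply [Fintype X] [DecidableEq X] (π : X → ℝ) (S : Finset X)
    (P : Matrix X X ℝ) (x y : X) :
    (gibbsTwo π S * P * gibbsTwo π S) x y =
      π y * (if x ∈ S then
              (if y ∈ S then (∑ u ∈ S, ∑ v ∈ S, π u * P u v) / (mass π S * mass π S)
               else (∑ u ∈ S, ∑ v ∈ Sᶜ, π u * P u v) / (mass π S * mass π Sᶜ))
             else
              (if y ∈ S then (∑ u ∈ Sᶜ, ∑ v ∈ S, π u * P u v) / (mass π Sᶜ * mass π S)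
               else (∑ u ∈ Sᶜ, ∑ v ∈ Sᶜ, π u * P u v) / (mass π Sᶜ * mass π Sᶜ))) := by
  have hGP : ∀ v, (gibbsTwo π S * P) x v =
      if x ∈ S then (∑ u ∈ S, π u * P u v) / mass π S
      else (∑ u ∈ Sᶜ, π u * P u v) / mass π Sᶜ := by
    intro v
    rw [Matrix.mul_apply]
    by_cases hx : x ∈ S
    · simp only [gibbsTwo, Matrix.of_apply, hx, if_true]
      rw [ite_sum_left, Finset.sum_div]
      apply Finset.sum_congr rfl
      intro u _; ring
    · simp only [gibbsTwo, Matrix.of_apply, hx, if_false]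
      have : ∀ u, (if u ∈ S then (0:ℝ) else π u / mass π Sᶜ) =
          (if u ∈ Sᶜ then π u / mass π Sᶜ else 0) := by
        intro u; by_cases hu : u ∈ S <;> simp [hu]
      simp only [this]
      rw [ite_sum_left, Finset.sum_div]
      apply Finset.sum_congr rfl
      intro u _; ring
  rw [Matrix.mul_apply]
  simp only [hGP]
  by_cases hy : y ∈ S
  · have hG : ∀ v, gibbsTwo π S v y = if v ∈ S then π y / mass π S else 0 := by
      intro v; by_cases hv : v ∈ S <;> simp [gibbsTwo, hv, hy]
    simp only [hG, ite_sum_right, hy, if_true]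
    by_cases hx : x ∈ S <;> simp only [hx, if_true, if_false]
    · rw [Finset.sum_comm (s := S) (t := S) (f := fun u v => π u * P u v)]
      rw [Finset.sum_div, Finset.mul_sum]
      apply Finset.sum_congr rfl
      intro v _
      ring
    · rw [Finset.sum_comm (s := Sᶜ) (t := S) (f := fun u v => π u * P u v)]
      rw [Finset.sum_div, Finset.mul_sum]
      apply Finset.sum_congr rfl
      intro v _
      ring
  · have hG : ∀ v, gibbsTwo π S v y = if v ∈ Sᶜ then π y / mass π Sᶜ else 0 := by
      intro v; by_cases hv : v ∈ S <;> simp [gibbsTwo, hv, hy]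
    simp only [hG, ite_sum_right, hy, if_false]
    by_cases hx : x ∈ S <;> simp only [hx, if_true, if_false]
    · rw [Finset.sum_comm (s := S) (t := Sᶜ) (f := fun u v => π u * P u v)]
      rw [Finset.sum_div, Finset.mul_sum]
      apply Finset.sum_congr rfl
      intro v _
      ring
    · rw [Finset.sum_comm (s := Sᶜ) (t := Sᶜ) (f := fun u v => π u * P u v)]
      rw [Finset.sum_div, Finset.mul_sum]
      apply Finset.sum_congr rfl
      intro v _
      ring

/-- block-constant coefficient of G_S P G_S. -/
def cfunc [Fintype X] [DecidableEq X] (π : X → ℝ) (S : Finset X) (P : Matrix X X ℝ)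
    (x y : X) : ℝ :=
  if x ∈ S then
    (if y ∈ S then (∑ u ∈ S, ∑ v ∈ S, π u * P u v) / (mass π S * mass π S)
     else (∑ u ∈ S, ∑ v ∈ Sᶜ, π u * P u v) / (mass π S * mass π Sᶜ))
  else
    (if y ∈ S then (∑ u ∈ Sᶜ, ∑ v ∈ S, π u * P u v) / (mass π Sᶜ * mass π S)
     else (∑ u ∈ Sᶜ, ∑ v ∈ Sᶜ, π u * P u v) / (mass π Sᶜ * mass π Sᶜ))

lemma gpg_apply' [Fintype X] [DecidableEq X] (π : X → ℝ) (S : Finset X)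
    (P : Matrix X X ℝ) (x y : X) :
    (gibbsTwo π S * P * gibbsTwo π S) x y = π y * cfunc π S P x y :=
  gpg_apply π S P x y

lemma frob_eq [Fintype X] [DecidableEq X] (π : X → ℝ) (hπ : ∀ x, 0 < π x)
    (S : Finset X) (P : Matrix X X ℝ) :
    frobSq π (gibbsTwo π S * P * gibbsTwo π S - Pimat π)
      = mass π S * mass π S
          * ((∑ u ∈ S, ∑ v ∈ S, π u * P u v) / (mass π S * mass π S) - 1)^2
        + mass π S * mass π Sᶜ
          * ((∑ u ∈ Sᶜ, ∑ v ∈ S, π u * P u v) / (mass π Sᶜ * mass π S) - 1)^2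
        + mass π Sᶜ * mass π S
          * ((∑ u ∈ S, ∑ v ∈ Sᶜ, π u * P u v) / (mass π S * mass π Sᶜ) - 1)^2
        + mass π Sᶜ * mass π Sᶜ
          * ((∑ u ∈ Sᶜ, ∑ v ∈ Sᶜ, π u * P u v) / (mass π Sᶜ * mass π Sᶜ) - 1)^2 := by
  have hMapp : ∀ y x, (gibbsTwo π S * P * gibbsTwo π S - Pimat π) y x
      = π x * (cfunc π S P y x - 1) := by
    intro y x
    rw [Matrix.sub_apply, gpg_apply']
    simp only [Pimat, Matrix.of_apply]
    ring
  have step1 : frobSq π (gibbsTwo π S * P * gibbsTwo π S - Pimat π)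
      = ∑ x, ∑ y, π x * π y * (cfunc π S P y x - 1)^2 := by
    simp only [frobSq, piAdj, Matrix.trace, Matrix.diag, Matrix.mul_apply,
      Matrix.of_apply]
    apply Finset.sum_congr rfl; intro x _
    apply Finset.sum_congr rfl; intro y _
    rw [hMapp y x]
    have hx := (hπ x).ne'
    field_simp
  have hblock : ∀ (A B : Finset X) (k : ℝ), (∀ x ∈ A, ∀ y ∈ B, cfunc π S P y x = k) →
      ∑ x ∈ A, ∑ y ∈ B, π x * π y * (cfunc π S P y x - 1)^2
        = mass π A * mass π B * (k - 1)^2 := by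
    intro A B k hk
    have h1 : ∑ x ∈ A, ∑ y ∈ B, π x * π y * (cfunc π S P y x - 1)^2
        = ∑ x ∈ A, ∑ y ∈ B, π x * π y * (k - 1)^2 := by
      apply Finset.sum_congr rfl; intro x hx
      apply Finset.sum_congr rfl; intro y hy
      rw [hk x hx y hy]
    rw [h1, dsum_const_mass]
  rw [step1, split4 S (fun x y => π x * π y * (cfunc π S P y x - 1)^2)]
  rw [hblock S S ((∑ u ∈ S, ∑ v ∈ S, π u * P u v) / (mass π S * mass π S))
      (fun x hx y hy => by simp [cfunc, hx, hy]),
    hblock S Sᶜ ((∑ u ∈ Sᶜ, ∑ v ∈ S, π u * P u v) / (mass π Sᶜ * mass π S))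
      (fun x hx y hy => by simp [cfunc, hx, Finset.mem_compl.mp hy]),
    hblock Sᶜ S ((∑ u ∈ S, ∑ v ∈ Sᶜ, π u * P u v) / (mass π S * mass π Sᶜ))
      (fun x hx y hy => by simp [cfunc, Finset.mem_compl.mp hx, hy]),
    hblock Sᶜ Sᶜ ((∑ u ∈ Sᶜ, ∑ v ∈ Sᶜ, π u * P u v) / (mass π Sᶜ * mass π Sᶜ))
      (fun x hx y hy => by simp [cfunc, Finset.mem_compl.mp hx, Finset.mem_compl.mp hy])]

/-- difference-of-submodular decomposition of ‖G_S P G_S − Π‖_{F,π}. -/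
theorem stmt17 [Fintype X] [DecidableEq X] (π : X → ℝ)
    (hπ : ∀ x, 0 < π x) (hsum : ∑ x, π x = 1)
    (P : Matrix X X ℝ) (hP : IsReversible π P) (hpsd : IsPosSemidefPi π P)
    (S : Finset X) (hS : S ≠ ∅) (hS' : S ≠ Finset.univ) :
    Real.sqrt (frobSq π (gibbsTwo π S * P * gibbsTwo π S - Pimat π))
      = (3 - 1 / (mass π S * mass π Sᶜ))
        + (1 / mass π S) * (∑ x ∈ Sᶜ, ∑ y ∈ Sᶜ, π x * P x y)
        + (1 / mass π Sᶜ) * (∑ x ∈ S, ∑ y ∈ S, π x * P x y) ∧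
    SubmodularOn (fun T : Finset X => 3 - 1 / (mass π T * mass π Tᶜ)) ∧
    SupermodularOn (fun T : Finset X =>
      (1 / mass π T) * ∑ x ∈ Tᶜ, ∑ y ∈ Tᶜ, π x * P x y) ∧
    SupermodularOn (fun T : Finset X =>
      (1 / mass π Tᶜ) * ∑ x ∈ T, ∑ y ∈ T, π x * P x y) := by
  classical
  have ha : 0 < mass π S := mass_pos π hπ hS
  have hbpos : 0 < mass π Sᶜ := mass_pos π hπ (compl_ne_empty hS')
  have h1a : 0 < 1 - mass π S := by rw [← mass_compl π hsum S]; exact hbpos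
  have hrow : ∀ x, ∑ y, P x y = 1 := hP.1.2
  have hPn : ∀ x y, 0 ≤ P x y := hP.1.1
  have hw : ∀ x y, 0 ≤ π x * P x y := fun x y => mul_nonneg (hπ x).le (hPn x y)
  have hrowsum : ∀ T : Finset X,
      (∑ u ∈ T, ∑ v ∈ S, π u * P u v) + (∑ u ∈ T, ∑ v ∈ Sᶜ, π u * P u v) = mass π T := by
    intro T
    rw [← Finset.sum_add_distrib]
    apply Finset.sum_congr rfl
    intro x _
    rw [Finset.sum_add_sum_compl S (fun v => π x * P x v), ← Finset.mul_sum, hrow x,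
      mul_one]
  have hA1' : (∑ u ∈ S, ∑ v ∈ S, π u * P u v)
      = mass π S - (∑ u ∈ S, ∑ v ∈ Sᶜ, π u * P u v) := by
    have := hrowsum S; linarith
  have hA3' : (∑ u ∈ Sᶜ, ∑ v ∈ S, π u * P u v)
      = (∑ u ∈ S, ∑ v ∈ Sᶜ, π u * P u v) := by
    rw [Finset.sum_comm]
    apply Finset.sum_congr rfl; intro x _
    apply Finset.sum_congr rfl; intro y _
    exact hP.2 y x
  have hA4' : (∑ u ∈ Sᶜ, ∑ v ∈ Sᶜ, π u * P u v)
      = 1 - mass π S - (∑ u ∈ S, ∑ v ∈ Sᶜ, π u * P u v) := by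
    have h := hrowsum Sᶜ
    rw [mass_compl π hsum S, hA3'] at h
    linarith
  have hq_le : (∑ u ∈ S, ∑ v ∈ Sᶜ, π u * P u v) ≤ mass π S * (1 - mass π S) := by
    have hf : 0 ≤ ∑ x, ∑ y, π x * (if x ∈ S then mass π Sᶜ else -(mass π S)) * P x y
        * (if y ∈ S then mass π Sᶜ else -(mass π S)) :=
      hpsd (fun x => if x ∈ S then mass π Sᶜ else -(mass π S))
    rw [split4 S (fun x y => π x * (if x ∈ S then mass π Sᶜ else -(mass π S)) * P x y
      * (if y ∈ S then mass π Sᶜ else -(mass π S)))] at hf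
    have e : ∀ (A B : Finset X) (cA cB : ℝ),
        (∀ x ∈ A, (if x ∈ S then mass π Sᶜ else -(mass π S)) = cA) →
        (∀ y ∈ B, (if y ∈ S then mass π Sᶜ else -(mass π S)) = cB) →
        ∑ x ∈ A, ∑ y ∈ B, π x * (if x ∈ S then mass π Sᶜ else -(mass π S)) * P x y
            * (if y ∈ S then mass π Sᶜ else -(mass π S))
          = cA * cB * ∑ x ∈ A, ∑ y ∈ B, π x * P x y := by
      intro A B cA cB hA hB
      rw [← dsum_factor]
      apply Finset.sum_congr rfl; intro x hx
      apply Finset.sum_congr rfl; intro y hy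
      rw [hA x hx, hB y hy]; ring
    rw [e S S (mass π Sᶜ) (mass π Sᶜ) (fun x hx => if_pos hx) (fun y hy => if_pos hy),
      e S Sᶜ (mass π Sᶜ) (-(mass π S)) (fun x hx => if_pos hx)
        (fun y hy => if_neg (Finset.mem_compl.mp hy)),
      e Sᶜ S (-(mass π S)) (mass π Sᶜ) (fun x hx => if_neg (Finset.mem_compl.mp hx))
        (fun y hy => if_pos hy),
      e Sᶜ Sᶜ (-(mass π S)) (-(mass π S)) (fun x hx => if_neg (Finset.mem_compl.mp hx))
        (fun y hy => if_neg (Finset.mem_compl.mp hy))] at hf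
    rw [hA1', hA3', hA4', mass_compl π hsum S] at hf
    nlinarith [hf]
  refine ⟨?_, ?_, ?_, ?_⟩
  · rw [frob_eq π hπ S P, mass_compl π hsum S]
    exact alg_main (mass π S) _ _ _ _ ha h1a hA1' hA3' hA4' hq_le
  · intro A B hA hB hI hU
    simp only
    have hmI : 0 < mass π (A ∩ B) := mass_pos π hπ hI.1
    have hmU1 : mass π (A ∪ B) < 1 := by
      have := mass_pos π hπ (compl_ne_empty hU.2)
      rw [mass_compl π hsum] at this; linarith
    have hIA : mass π (A ∩ B) ≤ mass π A := mass_mono π hπ Finset.inter_subset_left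
    have hIB : mass π (A ∩ B) ≤ mass π B := mass_mono π hπ Finset.inter_subset_right
    have hAU : mass π A ≤ mass π (A ∪ B) := mass_mono π hπ Finset.subset_union_left
    have hBU : mass π B ≤ mass π (A ∪ B) := mass_mono π hπ Finset.subset_union_right
    have hmod := mass_modular π A B
    have h1 : 1/(mass π A) + 1/(mass π B)
        ≤ 1/(mass π (A ∩ B)) + 1/(mass π (A ∪ B)) := inv_four hmI hIA hIB hmod
    have h2 : 1/(1 - mass π A) + 1/(1 - mass π B)
        ≤ 1/(1 - mass π (A ∪ B)) + 1/(1 - mass π (A ∩ B)) :=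
      inv_four (by linarith) (by linarith) (by linarith) (by linarith)
    have key : ∀ T : Finset X, NontrivSet T →
        1 / (mass π T * mass π Tᶜ) = 1/(mass π T) + 1/(1 - mass π T) := by
      intro T hT
      have h0 : 0 < mass π T := mass_pos π hπ hT.1
      have h1' : 0 < mass π Tᶜ := mass_pos π hπ (compl_ne_empty hT.2)
      rw [mass_compl π hsum] at h1' ⊢
      field_simp
      ring
    rw [key A hA, key B hB, key (A ∩ B) hI, key (A ∪ B) hU] at *
    linarith
  · intro A B hA hB hI hU
    simp only
    have hmI : 0 < mass π (A ∩ B) := mass_pos π hπ hI.1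
    have hIA : mass π (A ∩ B) ≤ mass π A := mass_mono π hπ Finset.inter_subset_left
    have hIB : mass π (A ∩ B) ≤ mass π B := mass_mono π hπ Finset.inter_subset_right
    have hAU : mass π A ≤ mass π (A ∪ B) := mass_mono π hπ Finset.subset_union_left
    have hBU : mass π B ≤ mass π (A ∪ B) := mass_mono π hπ Finset.subset_union_right
    have hmod := mass_modular π A B
    have hgsuper : ∑ x ∈ Aᶜ, ∑ y ∈ Aᶜ, π x * P x y + ∑ x ∈ Bᶜ, ∑ y ∈ Bᶜ, π x * P x y
        ≤ ∑ x ∈ (A ∪ B)ᶜ, ∑ y ∈ (A ∪ B)ᶜ, π x * P x y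
          + ∑ x ∈ (A ∩ B)ᶜ, ∑ y ∈ (A ∩ B)ᶜ, π x * P x y := by
      have := sum_sq_super Aᶜ Bᶜ _ hw
      rw [← Finset.compl_union, ← Finset.compl_inter] at this
      linarith
    have := prod_super (fA := 1/(mass π A)) (fB := 1/(mass π B))
      (fI := 1/(mass π (A ∪ B))) (fU := 1/(mass π (A ∩ B)))
      (gA := ∑ x ∈ Aᶜ, ∑ y ∈ Aᶜ, π x * P x y) (gB := ∑ x ∈ Bᶜ, ∑ y ∈ Bᶜ, π x * P x y)
      (gI := ∑ x ∈ (A ∪ B)ᶜ, ∑ y ∈ (A ∪ B)ᶜ, π x * P x y)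
      (gU := ∑ x ∈ (A ∩ B)ᶜ, ∑ y ∈ (A ∩ B)ᶜ, π x * P x y)
      (le_of_lt (div_pos one_pos (by linarith))) (dsum_nonneg _ _ hw)
      (by have := inv_four hmI hIA hIB hmod; linarith)
      (by linarith)
      (one_div_le_one_div_of_le (by linarith) hAU)
      (one_div_le_one_div_of_le hmI hIA)
      (dsum_mono (Finset.compl_subset_compl.2 Finset.subset_union_right) _ hw)
      (dsum_mono (Finset.compl_subset_compl.2 Finset.inter_subset_right) _ hw)
    linarith
  · intro A B hA hB hI hU
    simp only
    have hmI : 0 < mass π (A ∩ B) := mass_pos π hπ hI.1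
    have hmU1 : mass π (A ∪ B) < 1 := by
      have := mass_pos π hπ (compl_ne_empty hU.2)
      rw [mass_compl π hsum] at this; linarith
    have hIA : mass π (A ∩ B) ≤ mass π A := mass_mono π hπ Finset.inter_subset_left
    have hIB : mass π (A ∩ B) ≤ mass π B := mass_mono π hπ Finset.inter_subset_right
    have hAU : mass π A ≤ mass π (A ∪ B) := mass_mono π hπ Finset.subset_union_left
    have hBU : mass π B ≤ mass π (A ∪ B) := mass_mono π hπ Finset.subset_union_right
    have hmod := mass_modular π A B
    simp only [mass_compl π hsum]
    apply prod_super (fA := 1/(1 - mass π A)) (fB := 1/(1 - mass π B))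
      (fI := 1/(1 - mass π (A ∩ B))) (fU := 1/(1 - mass π (A ∪ B)))
    · exact le_of_lt (div_pos one_pos (by linarith))
    · exact dsum_nonneg B _ hw
    · have := inv_four (s := 1 - mass π (A ∪ B)) (x := 1 - mass π A)
        (y := 1 - mass π B) (w := 1 - mass π (A ∩ B))
        (by linarith) (by linarith) (by linarith) (by linarith)
      linarith
    · exact sum_sq_super A B _ hw
    · exact one_div_le_one_div_of_le (by linarith) (by linarith)
    · exact one_div_le_one_div_of_le (by linarith) (by linarith)
    · exact dsum_mono Finset.inter_subset_right _ hw
    · exact dsum_mono Finset.subset_union_right _ hw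


end
end GpgStmt
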